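/- Let $Z \in \mathbb{C}^{(k s)\times s}$ be a block vector (with $k$ blocks of size $s\times s$) such that $I_{ks} - ZZ^*$ is positive definite, and let $R_Z$ be the unique upper triangular matrix with positive diagonal entries satisfying $R_Z^* R_Z = I_{ks} - ZZ^*$. Then, writing $Z_{1:j}$ for the first $j$ blocks of $Z$, the $j$-th block row of $R_Z^{-*}Z$, namely $W_j := E_j^T R_Z^{-*} Z \in \mathbb{C}^{s\times s}$, satisfies $W_j^* W_j = (I - Z_{1:j}^* Z_{1:j})^{-1} - (I - Z_{1:j-1}^* Z_{1:j-1})^{-1}$ for $j = 1, \ldots, k$ (with the convention that the term for $j=1$ is $(I - Z_{1:0}^*Z_{1:0})^{-1} = I$). -/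

import Mathlib

open Matrix
open scoped ComplexOrder

/-- Gram matrix of the first `j` blocks of a block vector
`Z ∈ ℂ^{ks × s}`: `(Z_{1:j})ᴴ (Z_{1:j}) ∈ ℂ^{s×s}`. -/
private lemma pushthrough {m n : Type*} [Fintype m] [Fintype n] [DecidableEq m] [DecidableEq n]
    (X : Matrix m n ℂ) (h : IsUnit ((1 : Matrix m m ℂ) - X * Xᴴ).det) :
    Xᴴ * ((1 : Matrix m m ℂ) - X * Xᴴ)⁻¹ * X = ((1 : Matrix n n ℂ) - Xᴴ * X)⁻¹ - 1 := by
  have h1 : ((1 : Matrix m m ℂ) - X * Xᴴ) * ((1 : Matrix m m ℂ) - X * Xᴴ)⁻¹ = 1 :=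
    Matrix.mul_nonsing_inv _ h
  set B := ((1 : Matrix m m ℂ) - X * Xᴴ)⁻¹ with hB
  rw [Matrix.sub_mul, Matrix.one_mul] at h1
  have h1' : X * Xᴴ * B = B - 1 := by
    rw [eq_sub_iff_add_eq, add_comm]
    exact (sub_eq_iff_eq_add.mp h1).symm
  have hassoc : Xᴴ * X * (Xᴴ * B * X) = Xᴴ * (X * Xᴴ * B) * X := by
    simp only [Matrix.mul_assoc]
  have h2 : ((1 : Matrix n n ℂ) - Xᴴ * X) * (1 + Xᴴ * B * X) = 1 := by
    simp only [Matrix.sub_mul, Matrix.mul_add, Matrix.mul_sub, Matrix.one_mul, Matrix.mul_one,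
      hassoc, h1']
    abel
  have h3 : ((1 : Matrix n n ℂ) - Xᴴ * X)⁻¹ = 1 + Xᴴ * B * X := Matrix.inv_eq_right_inv h2
  rw [h3]
  abel



noncomputable def partialGram {k s : ℕ} (Z : Matrix (Fin k × Fin s) (Fin s) ℂ) (j : ℕ) :
    Matrix (Fin s) (Fin s) ℂ :=
  fun a b =>
    ∑ p ∈ Finset.univ.filter (fun p : Fin k × Fin s => (p.1 : ℕ) < j),
      (starRingEnd ℂ) (Z p a) * Z p b

private lemma key_sum {k s : ℕ}
    (Z : Matrix (Fin k × Fin s) (Fin s) ℂ)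
    (hpd : ((1 : Matrix (Fin k × Fin s) (Fin k × Fin s) ℂ) - Z * Zᴴ).PosDef)
    (R : Matrix (Fin k × Fin s) (Fin k × Fin s) ℂ)
    (hRtri : ∀ p q : Fin k × Fin s,
      (q.1 : ℕ) * s + (q.2 : ℕ) < (p.1 : ℕ) * s + (p.2 : ℕ) → R p q = 0)
    (hRchol : Rᴴ * R = 1 - Z * Zᴴ) (m : ℕ) :
    ∀ a b : Fin s,
      (∑ p ∈ Finset.univ.filter (fun p : Fin k × Fin s => (p.1 : ℕ) < m),
        (starRingEnd ℂ) (((R⁻¹)ᴴ * Z) p a) * (((R⁻¹)ᴴ * Z) p b))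
      = ((1 - partialGram Z m)⁻¹ - 1) a b := by
  classical
  have hAdet : IsUnit ((1 : Matrix (Fin k × Fin s) (Fin k × Fin s) ℂ) - Z * Zᴴ).det :=
    hpd.det_pos.ne'.isUnit
  have hRdet : IsUnit R.det := by
    have hd : Rᴴ.det * R.det = ((1 : Matrix (Fin k × Fin s) (Fin k × Fin s) ℂ) - Z * Zᴴ).det := by
      rw [← Matrix.det_mul, hRchol]
    rw [← hd] at hAdet
    exact isUnit_of_mul_isUnit_right hAdet
  haveI hRinv : Invertible R := R.invertibleOfIsUnitDet hRdet
  set ord : Fin k × Fin s → ℕ := fun p => (p.1 : ℕ) * s + (p.2 : ℕ) with hord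
  have hRbt : R.BlockTriangular ord := fun p q h => hRtri p q h
  have hRibt : R⁻¹.BlockTriangular ord := Matrix.blockTriangular_inv_of_blockTriangular hRbt
  set P : Fin k × Fin s → Prop := fun p => ord p < m * s with hPdef
  have hPiff : ∀ p : Fin k × Fin s, ((p.1 : ℕ) < m ↔ P p) := by
    intro p
    have h2 : (p.2 : ℕ) < s := p.2.isLt
    simp only [hPdef, hord]
    constructor
    · intro h; by_contra hc; push_neg at hc; nlinarith
    · intro h; by_contra hc; push_neg at hc; nlinarith
  set Zm : Matrix {p : Fin k × Fin s // P p} (Fin s) ℂ := Matrix.of (fun p a => Z p.1 a) with hZm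
  set Rm := R.toBlock P P with hRm
  set N := R⁻¹.toBlock P P with hNdef
  haveI hRmInv : Invertible Rm := hRbt.invertibleToBlock (m * s)
  have hNRm : N = Rm⁻¹ := (hRbt.inv_toBlock (m * s)).symm
  -- restricted Cholesky
  have hchol_m : Rmᴴ * Rm = 1 - Zm * Zmᴴ := by
    ext p q
    have hsplit := Fintype.sum_subtype_add_sum_subtype P
      (fun r : Fin k × Fin s => star (R r p.1) * R r q.1)
    have hzero : ∑ r : {r : Fin k × Fin s // ¬ P r}, star (R r.1 p.1) * R r.1 q.1 = 0 := by
      apply Finset.sum_eq_zero; intro r _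
      have hlt : ord p.1 < ord r.1 := lt_of_lt_of_le p.2 (not_lt.mp r.2)
      rw [hRtri r.1 p.1 hlt, star_zero, zero_mul]
    have hfull : (Rᴴ * R) p.1 q.1 = ((1 : Matrix (Fin k × Fin s) (Fin k × Fin s) ℂ) - Z * Zᴴ) p.1 q.1 := by
      rw [hRchol]
    rw [Matrix.mul_apply] at hfull
    simp only [conjTranspose_apply] at hfull
    rw [← hsplit, hzero, add_zero] at hfull
    rw [Matrix.mul_apply]
    simp only [conjTranspose_apply, hRm, toBlock_apply]
    rw [hfull]
    simp only [Matrix.sub_apply, Matrix.one_apply, Matrix.mul_apply, conjTranspose_apply,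
      hZm, Matrix.of_apply, Subtype.ext_iff]
  -- invertibility of the restricted 1 - Zm Zmᴴ
  have hBmdet : IsUnit ((1 : Matrix {p : Fin k × Fin s // P p} _ ℂ) - Zm * Zmᴴ).det := by
    rw [← hchol_m, Matrix.det_mul, Matrix.det_conjTranspose]
    exact (Matrix.isUnit_det_of_invertible Rm).star.mul (Matrix.isUnit_det_of_invertible Rm)
  -- N * Nᴴ = (1 - Zm Zmᴴ)⁻¹
  have hNNH : N * Nᴴ = ((1 : Matrix {p : Fin k × Fin s // P p} _ ℂ) - Zm * Zmᴴ)⁻¹ := by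
    rw [hNRm, Matrix.conjTranspose_nonsing_inv, ← Matrix.mul_inv_rev, hchol_m]
  have hmem : ∀ x : Fin k × Fin s,
      x ∈ Finset.univ.filter (fun p : Fin k × Fin s => (p.1 : ℕ) < m) ↔ P x := by
    intro x; rw [Finset.mem_filter]; simp [hPiff x]
  -- partialGram equals Zmᴴ Zm
  have hG : (1 : Matrix (Fin s) (Fin s) ℂ) - partialGram Z m = 1 - Zmᴴ * Zm := by
    congr 1
    ext a b
    rw [partialGram, Matrix.mul_apply,
      Finset.sum_subtype _ hmem (fun p => (starRingEnd ℂ) (Z p a) * Z p b)]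
    apply Finset.sum_congr rfl
    intro p _
    rw [conjTranspose_apply]
    simp only [hZm, Matrix.of_apply, starRingEnd_apply]
  -- rows of Y restricted
  have hY : ∀ (p : {p : Fin k × Fin s // P p}) (a : Fin s),
      ((R⁻¹)ᴴ * Z) p.1 a = (Nᴴ * Zm) p a := by
    intro p a
    rw [Matrix.mul_apply, Matrix.mul_apply]
    have hsplit := Fintype.sum_subtype_add_sum_subtype P
      (fun q : Fin k × Fin s => star (R⁻¹ q p.1) * Z q a)
    have hzero : ∑ q : {q : Fin k × Fin s // ¬ P q}, star (R⁻¹ q.1 p.1) * Z q.1 a = 0 := by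
      apply Finset.sum_eq_zero; intro q _
      have hlt : ord p.1 < ord q.1 := lt_of_lt_of_le p.2 (not_lt.mp q.2)
      rw [hRibt hlt, star_zero, zero_mul]
    simp only [conjTranspose_apply]
    rw [← hsplit, hzero, add_zero]
    simp [hNdef, toBlock_apply, hZm]
  -- main computation
  intro a b
  rw [Finset.sum_subtype _ hmem
    (fun p => (starRingEnd ℂ) (((R⁻¹)ᴴ * Z) p a) * (((R⁻¹)ᴴ * Z) p b))]
  have : ∑ p : {p : Fin k × Fin s // P p},
      (starRingEnd ℂ) (((R⁻¹)ᴴ * Z) p.1 a) * (((R⁻¹)ᴴ * Z) p.1 b)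
      = ((Nᴴ * Zm)ᴴ * (Nᴴ * Zm)) a b := by
    rw [Matrix.mul_apply]
    apply Finset.sum_congr rfl
    intro p _
    rw [hY p a, hY p b, conjTranspose_apply, starRingEnd_apply]
  rw [this, Matrix.conjTranspose_mul, Matrix.conjTranspose_conjTranspose]
  have hcomb : Zmᴴ * N * (Nᴴ * Zm)
      = Zmᴴ * ((1 : Matrix {p : Fin k × Fin s // P p} _ ℂ) - Zm * Zmᴴ)⁻¹ * Zm := by
    rw [Matrix.mul_assoc, ← Matrix.mul_assoc N, hNNH, ← Matrix.mul_assoc, Matrix.mul_assoc]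
  rw [hcomb, pushthrough Zm hBmdet, hG]

theorem aux_lemma_cholesky_rows {k s : ℕ}
    (Z : Matrix (Fin k × Fin s) (Fin s) ℂ)
    (hpd : ((1 : Matrix (Fin k × Fin s) (Fin k × Fin s) ℂ) - Z * Zᴴ).PosDef)
    (R : Matrix (Fin k × Fin s) (Fin k × Fin s) ℂ)
    (hRtri : ∀ p q : Fin k × Fin s,
      (q.1 : ℕ) * s + (q.2 : ℕ) < (p.1 : ℕ) * s + (p.2 : ℕ) → R p q = 0)
    (hRdiag : ∀ p : Fin k × Fin s, 0 < (R p p).re ∧ (R p p).im = 0)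
    (hRchol : Rᴴ * R = 1 - Z * Zᴴ) :
    ∀ j : Fin k,
      letI W : Matrix (Fin s) (Fin s) ℂ := fun a b => ((R⁻¹)ᴴ * Z) (j, a) b
      Wᴴ * W =
        (1 - partialGram Z ((j : ℕ) + 1))⁻¹ - (1 - partialGram Z (j : ℕ))⁻¹ := by
  intro j
  ext a b
  have h1 := key_sum Z hpd R hRtri hRchol ((j : ℕ) + 1) a b
  have h2 := key_sum Z hpd R hRtri hRchol (j : ℕ) a b
  have hsplit : Finset.univ.filter (fun p : Fin k × Fin s => (p.1 : ℕ) < (j : ℕ) + 1)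
      = Finset.univ.filter (fun p : Fin k × Fin s => (p.1 : ℕ) < (j : ℕ))
        ∪ Finset.univ.filter (fun p : Fin k × Fin s => p.1 = j) := by
    ext p
    simp only [Finset.mem_filter, Finset.mem_union, Finset.mem_univ, true_and]
    constructor
    · intro h
      rcases Nat.lt_succ_iff_lt_or_eq.mp h with h | h
      · exact Or.inl h
      · exact Or.inr (Fin.ext h)
    · rintro (h | h)
      · omega
      · rw [h]; omega
  have hdisj : Disjoint
      (Finset.univ.filter (fun p : Fin k × Fin s => (p.1 : ℕ) < (j : ℕ)))
      (Finset.univ.filter (fun p : Fin k × Fin s => p.1 = j)) := by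
    rw [Finset.disjoint_filter]
    intro p _ hlt heq
    rw [heq] at hlt
    omega
  have hrow : ∀ f : Fin k × Fin s → ℂ,
      ∑ p ∈ Finset.univ.filter (fun p : Fin k × Fin s => p.1 = j), f p
        = ∑ c : Fin s, f (j, c) := by
    intro f
    rw [Finset.sum_filter, Fintype.sum_prod_type, Finset.sum_eq_single j]
    · simp
    · intro i _ hne
      apply Finset.sum_eq_zero
      intro c _
      simp [hne]
    · intro h
      simp at h
  have hRHS : ((1 - partialGram Z ((j : ℕ) + 1))⁻¹ - (1 - partialGram Z (j : ℕ))⁻¹) a b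
      = ((1 - partialGram Z ((j : ℕ) + 1))⁻¹ - 1) a b
        - ((1 - partialGram Z (j : ℕ))⁻¹ - 1) a b := by
    simp only [Matrix.sub_apply, Matrix.one_apply]
    ring
  rw [hRHS, ← h1, ← h2, hsplit, Finset.sum_union hdisj, add_sub_cancel_left,
    hrow]
  erw [Matrix.mul_apply]
  apply Finset.sum_congr rfl
  intro c _
  erw [conjTranspose_apply, starRingEnd_apply]
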